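/- A transaction schedule cannot be reordered to be serializable if it contains a dependency cycle with no write-write dependencies between pending transactions: let T be a finite set of transactions with pairwise distinct commit timestamps, each either committed or pending with respect to M, and suppose the dependency relation dep contains a cycle t_0 → t_1 → ... → t_n = t_0 in T such that no edge of the cycle is a ww dependency between two pending transactions. Then for every reordering ρ, every edge of the cycle remains a dependency with respect to the new commit timestamps; in particular the recomputed dependency relation dep' still contains a cycle, so no reordering makes the schedule serializable. -/

import Mathlib

/-- A timestamp is a pair `(m, p)` of naturals, ordered lexicographically. -/
abbrev Timestamp : Type := ℕ ×ₗ ℕ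

/-- A transaction: a start timestamp of the form `(m, 0)`, a commit timestamp
`(M, q)` with `q ≥ 1` and `start ≤ (M, 0)`, a finite read set of key/version
pairs with versions at most the start timestamp, and a finite write set of keys. -/
structure Txn (Key : Type) where
  startTS : Timestamp
  commitTS : Timestamp
  start_snd : (ofLex startTS).2 = 0
  commit_pos : 1 ≤ (ofLex commitTS).2
  start_le : startTS ≤ toLex ((ofLex commitTS).1, 0)
  reads : Finset (Key × Timestamp)
  writes : Finset Key
  reads_snapshot : ∀ kv ∈ reads, kv.2 ≤ startTS

/-- Concurrency of two transactions with respect to a commit-timestamp assignment `C`. -/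
def ConcurrentWith {Key : Type} (C : Txn Key → Timestamp) (t1 t2 : Txn Key) : Prop :=
  (C t1 < C t2 → t2.startTS < C t1) ∧ (C t2 < C t1 → t1.startTS < C t2)

/-- Concurrency with respect to the original commit timestamps. -/
def Concurrent {Key : Type} (t1 t2 : Txn Key) : Prop :=
  ConcurrentWith (fun t => t.commitTS) t1 t2

/-- Write-write dependency `t1 →ww t2` w.r.t. commit assignment `C`. -/
def wwC {Key : Type} (C : Txn Key → Timestamp) (t1 t2 : Txn Key) : Prop :=
  t1 ≠ t2 ∧ (∃ k, k ∈ t1.writes ∧ k ∈ t2.writes) ∧ C t1 < C t2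

/-- Write-read dependency `t1 →wr t2` w.r.t. commit assignment `C`. -/
def wrC {Key : Type} (C : Txn Key → Timestamp) (t1 t2 : Txn Key) : Prop :=
  t1 ≠ t2 ∧ ∃ kv ∈ t2.reads, kv.1 ∈ t1.writes ∧ kv.2 = C t1

/-- Read-write dependency `t1 →rw t2` w.r.t. commit assignment `C`. -/
def rwC {Key : Type} (C : Txn Key → Timestamp) (t1 t2 : Txn Key) : Prop :=
  t1 ≠ t2 ∧ ∃ kv ∈ t1.reads, kv.1 ∈ t2.writes ∧ kv.2 < C t2

/-- The dependency relation: union of ww, wr and rw. -/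
def depC {Key : Type} (C : Txn Key → Timestamp) (t1 t2 : Txn Key) : Prop :=
  wwC C t1 t2 ∨ wrC C t1 t2 ∨ rwC C t1 t2

/-- `t` is committed with respect to the next block number `M`. -/
def Committed {Key : Type} (M : ℕ) (t : Txn Key) : Prop :=
  (ofLex t.commitTS).1 < M

/-- `t` is pending with respect to the next block number `M`:
its commit timestamp is `(M, p)` (with `p ≥ 1` automatic). -/
def Pending {Key : Type} (M : ℕ) (t : Txn Key) : Prop :=
  (ofLex t.commitTS).1 = M

/-- A reordering of the transactions in `T`: it assigns to each pending
transaction a new commit timestamp `(M, p')` with `p' ≥ 1`, injectively on `T`,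
leaving committed transactions' commit timestamps (and, implicitly, all start
timestamps, read sets and write sets) unchanged. -/
structure Reordering {Key : Type} (M : ℕ) (T : Finset (Txn Key)) where
  newCommit : Txn Key → Timestamp
  fix_committed : ∀ t ∈ T, Committed M t → newCommit t = t.commitTS
  pending_block : ∀ t ∈ T, Pending M t → (ofLex (newCommit t)).1 = M
  pending_pos : ∀ t ∈ T, Pending M t → 1 ≤ (ofLex (newCommit t)).2
  inj : ∀ t ∈ T, ∀ u ∈ T, newCommit t = newCommit u → t = u

private lemma ts_lt_of_fst_lt {a b : Timestamp} (h : (ofLex a).1 < (ofLex b).1) : a < b :=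
  Prod.Lex.lt_iff.mpr (Or.inl h)

private lemma ts_fst_le_of_le {a b : Timestamp} (h : a ≤ b) : (ofLex a).1 ≤ (ofLex b).1 := by
  rcases Prod.Lex.le_iff.mp h with h | ⟨h, _⟩
  · exact le_of_lt h
  · exact le_of_eq h

private lemma ts_lt_of_eq_lt {a b : Timestamp} (h1 : (ofLex a).1 = (ofLex b).1)
    (h2 : (ofLex a).2 < (ofLex b).2) : a < b :=
  Prod.Lex.lt_iff.mpr (Or.inr ⟨h1, h2⟩)

private lemma ts_snd_le_of_le {a b : Timestamp} (h : a ≤ b)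
    (h1 : (ofLex a).1 = (ofLex b).1) : (ofLex a).2 ≤ (ofLex b).2 := by
  rcases Prod.Lex.le_iff.mp h with h | ⟨_, h⟩
  · omega
  · exact h

/-- A transaction whose commit timestamp is `≤ (M, 0)` must be committed. -/
private lemma committed_of_commit_le {Key : Type} {M : ℕ} (t : Txn Key)
    (h : t.commitTS ≤ toLex (M, 0)) : Committed M t := by
  have hfst := ts_fst_le_of_le h
  have hM : (ofLex (toLex (M, 0) : Timestamp)).1 = M := rfl
  have hz : (ofLex (toLex (M, 0) : Timestamp)).2 = 0 := rfl
  rcases lt_or_eq_of_le hfst with h' | h'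
  · rw [hM] at h'; exact h'
  · have h2 := ts_snd_le_of_le h h'
    have h3 := t.commit_pos
    rw [hz] at h2
    unfold Committed; omega

/-- Key lemma: each edge of the cycle is preserved by the reordering. -/
private lemma dep_preserved {Key : Type} {M : ℕ} {T : Finset (Txn Key)}
    (hcp : ∀ t ∈ T, Committed M t ∨ Pending M t)
    (ρ : Reordering M T) (t1 t2 : Txn Key) (ht1 : t1 ∈ T) (ht2 : t2 ∈ T)
    (hdep : depC (fun x => x.commitTS) t1 t2)
    (hnoww : ¬ (Pending M t1 ∧ Pending M t2 ∧ wwC (fun x => x.commitTS) t1 t2)) :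
    depC ρ.newCommit t1 t2 := by
  have hle1 : t1.commitTS ≤ toLex ((ofLex t1.commitTS).1, 0) → False := by
    intro h
    have h2 := ts_snd_le_of_le h rfl
    have h3 := t1.commit_pos
    have hz : (ofLex (toLex ((ofLex t1.commitTS).1, 0) : Timestamp)).2 = 0 := rfl
    rw [hz] at h2; omega
  rcases hdep with hww | hwr | hrw
  · -- ww case
    obtain ⟨hne, hk, hlt⟩ := hww
    rcases hcp t1 ht1 with hc1 | hp1
    · rcases hcp t2 ht2 with hc2 | hp2
      · exact Or.inl ⟨hne, hk, by
          rw [ρ.fix_committed t1 ht1 hc1, ρ.fix_committed t2 ht2 hc2]; exact hlt⟩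
      · -- t1 committed, t2 pending
        refine Or.inl ⟨hne, hk, ?_⟩
        apply ts_lt_of_fst_lt
        rw [ρ.fix_committed t1 ht1 hc1, ρ.pending_block t2 ht2 hp2]
        exact hc1
    · rcases hcp t2 ht2 with hc2 | hp2
      · -- t1 pending, t2 committed: impossible
        exfalso
        have hlt' : t1.commitTS < t2.commitTS := hlt
        have := ts_fst_le_of_le (le_of_lt hlt')
        unfold Pending at hp1
        unfold Committed at hc2
        omega
      · exact absurd ⟨hp1, hp2, hne, hk, hlt⟩ hnoww
  · -- wr case
    obtain ⟨hne, kv, hkv, hk, hv⟩ := hwr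
    have hsnap : kv.2 ≤ t2.startTS := t2.reads_snapshot kv hkv
    have hc1 : Committed M t1 := by
      apply committed_of_commit_le
      have hv' : kv.2 = t1.commitTS := hv
      rw [← hv']
      refine le_trans (le_trans hsnap t2.start_le) ?_
      have : (ofLex t2.commitTS).1 ≤ M := by
        rcases hcp t2 ht2 with h | h
        · exact le_of_lt h
        · exact le_of_eq h
      rcases lt_or_eq_of_le this with h' | h'
      · exact le_of_lt (ts_lt_of_fst_lt h')
      · exact le_of_eq (by rw [← h'])
    refine Or.inr (Or.inl ⟨hne, kv, hkv, hk, ?_⟩)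
    rw [ρ.fix_committed t1 ht1 hc1]
    exact hv
  · -- rw case
    obtain ⟨hne, kv, hkv, hk, hv⟩ := hrw
    refine Or.inr (Or.inr ⟨hne, kv, hkv, hk, ?_⟩)
    rcases hcp t2 ht2 with hc2 | hp2
    · rw [ρ.fix_committed t2 ht2 hc2]; exact hv
    · have hsnap : kv.2 ≤ t1.startTS := t1.reads_snapshot kv hkv
      have h1 : t1.startTS ≤ toLex (M, 0) := by
        refine le_trans t1.start_le ?_
        have : (ofLex t1.commitTS).1 ≤ M := by
          rcases hcp t1 ht1 with h | h
          · exact le_of_lt h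
          · exact le_of_eq h
        rcases lt_or_eq_of_le this with h' | h'
        · exact le_of_lt (ts_lt_of_fst_lt h')
        · exact le_of_eq (by rw [← h'])
      have h2 : (toLex (M, 0) : Timestamp) < ρ.newCommit t2 := by
        apply ts_lt_of_eq_lt
        · rw [ρ.pending_block t2 ht2 hp2]; rfl
        · have h4 := ρ.pending_pos t2 ht2 hp2
          have hz : (ofLex (toLex (M, 0) : Timestamp)).2 = 0 := rfl
          rw [hz]; omega
      exact lt_of_le_of_lt (le_trans hsnap h1) h2

/-- a transaction schedule cannot be reordered to be serializable
if it contains a dependency cycle with no ww dependencies between pending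
transactions. Let `T` be a finite set of transactions with pairwise distinct
commit timestamps, each committed or pending w.r.t. `M`, and let
`c 0 → c 1 → ... → c n = c 0` (`n ≥ 1`) be a dependency cycle in `T` such that
no edge is a ww dependency between two pending transactions. Then for every
reordering `ρ`, every edge of the cycle remains a dependency w.r.t. the new
commit timestamps; in particular the recomputed dependency relation still
contains a cycle, so no reordering makes the schedule serializable. -/
theorem cycle_without_pending_ww_unreorderable {Key : Type}
    (M : ℕ) (T : Finset (Txn Key))
    (hdist : ∀ t ∈ T, ∀ u ∈ T, t.commitTS = u.commitTS → t = u)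
    (hcp : ∀ t ∈ T, Committed M t ∨ Pending M t)
    (n : ℕ) (hn : 1 ≤ n) (c : ℕ → Txn Key)
    (hclose : c n = c 0)
    (hmem : ∀ i ≤ n, c i ∈ T)
    (hedge : ∀ i < n, depC (fun x => x.commitTS) (c i) (c (i + 1)))
    (hnoww : ∀ i < n, ¬ (Pending M (c i) ∧ Pending M (c (i + 1)) ∧
      wwC (fun x => x.commitTS) (c i) (c (i + 1))))
    (ρ : Reordering M T) :
    (∀ i < n, depC ρ.newCommit (c i) (c (i + 1))) ∧
    (∃ t ∈ T, Relation.TransGen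
      (fun a b => a ∈ T ∧ b ∈ T ∧ depC ρ.newCommit a b) t t) := by
  have hdep' : ∀ i < n, depC ρ.newCommit (c i) (c (i + 1)) := by
    intro i hi
    exact dep_preserved hcp ρ (c i) (c (i + 1)) (hmem i (le_of_lt hi))
      (hmem (i + 1) hi) (hedge i hi) (hnoww i hi)
  refine ⟨hdep', c 0, hmem 0 (by omega), ?_⟩
  have key : ∀ i, i ≤ n → 1 ≤ i → Relation.TransGen
      (fun a b => a ∈ T ∧ b ∈ T ∧ depC ρ.newCommit a b) (c 0) (c i) := by
    intro i
    induction i with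
    | zero => intro _ h; omega
    | succ j ih =>
      intro hle _
      rcases Nat.eq_zero_or_pos j with h0 | hpos
      · subst h0
        exact Relation.TransGen.single
          ⟨hmem 0 (by omega), hmem 1 (by omega), hdep' 0 (by omega)⟩
      · exact Relation.TransGen.tail (ih (by omega) hpos)
          ⟨hmem j (by omega), hmem (j + 1) (by omega), hdep' j (by omega)⟩
  have := key n le_rfl hn
  rwa [hclose] at this
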